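/- Let G be a countable group with a weakly mixing measure-preserving action on a probability space (X,μ). Then for every measure-preserving action of G on a probability space (Y,ν), every F ∈ L²(X × Y, μ ⊗ ν; ℂ) that is invariant under the diagonal action (F(g • x, g • y) = F(x,y) for (μ⊗ν)-a.e. (x,y), for every g ∈ G) depends only on the second variable: there exists h ∈ L²(Y,ν;ℂ) with h(g • y) = h(y) for ν-a.e. y for every g ∈ G, such that F(x,y) = h(y) for (μ⊗ν)-a.e. (x,y). -/

import Mathlib

open MeasureTheory

noncomputable section

private lemma ae_const_of_forall_invariant' {Z : Type*} [MeasurableSpace Z]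
    {ρ : Measure Z} [IsProbabilityMeasure ρ] {ι : Type*}
    (T : ι → Z → Z)
    (herg : ∀ S : Set Z, MeasurableSet S → (∀ γ, ρ (symmDiff S (T γ ⁻¹' S)) = 0) →
      ρ S = 0 ∨ ρ Sᶜ = 0)
    (u : Z → ℝ) (hu : Measurable u) (huinv : ∀ γ, ∀ᵐ z ∂ρ, u (T γ z) = u z) :
    ∃ c : ℝ, u =ᵐ[ρ] fun _ => c := by
  have hSmeas : ∀ t : ℝ, MeasurableSet {z | u z ≤ t} := fun t =>
    measurableSet_le hu measurable_const
  have hm : ∀ t : ℝ, ρ {z | u z ≤ t} = 0 ∨ ρ {z | u z ≤ t} = 1 := by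
    intro t
    have hnull : ∀ γ, ρ (symmDiff {z | u z ≤ t} (T γ ⁻¹' {z | u z ≤ t})) = 0 := by
      intro γ
      have h0 : ρ {z | ¬ (u (T γ z) = u z)} = 0 := by
        simpa [ae_iff] using huinv γ
      refine measure_mono_null (fun z hz => ?_) h0
      rcases Set.mem_symmDiff.mp hz with ⟨h1, h2⟩ | ⟨h1, h2⟩
      · intro he; exact h2 (by simpa [he] using h1)
      · intro he; exact h2 (by simpa [← he] using h1)
    rcases herg _ (hSmeas t) hnull with h | h
    · exact Or.inl h
    · exact Or.inr ((prob_compl_eq_zero_iff (hSmeas t)).mp h)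
  set E : Set ℝ := {t | ρ {z | u z ≤ t} = 1} with hE
  have hne : E.Nonempty := by
    by_contra hEc
    rw [Set.not_nonempty_iff_eq_empty] at hEc
    have h0 : ∀ t : ℝ, ρ {z | u z ≤ t} = 0 := by
      intro t
      refine (hm t).resolve_right fun h1 => ?_
      have : t ∈ E := h1
      simp [hEc] at this
    have hn : ρ (⋃ n : ℕ, {z | u z ≤ (n : ℝ)}) = 0 := measure_iUnion_null fun n => h0 n
    have huniv : (⋃ n : ℕ, {z | u z ≤ (n : ℝ)}) = Set.univ := by
      ext z
      simp only [Set.mem_iUnion, Set.mem_univ, iff_true, Set.mem_setOf_eq]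
      exact exists_nat_ge (u z)
    rw [huniv] at hn
    simp [measure_univ] at hn
  have hbdd : BddBelow E := by
    obtain ⟨n, hn⟩ : ∃ n : ℕ, ρ {z | u z ≤ -(n : ℝ)} = 0 := by
      by_contra hc; push_neg at hc
      have h1 : ∀ n : ℕ, ρ {z | u z ≤ -(n : ℝ)}ᶜ = 0 := fun n =>
        (prob_compl_eq_zero_iff (hSmeas _)).mpr ((hm _).resolve_left (hc n))
      have hn0 : ρ (⋃ n : ℕ, {z | u z ≤ -(n : ℝ)}ᶜ) = 0 := measure_iUnion_null h1
      have huniv : (⋃ n : ℕ, {z | u z ≤ -(n : ℝ)}ᶜ) = Set.univ := by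
        ext z
        simp only [Set.mem_iUnion, Set.mem_compl_iff, Set.mem_setOf_eq, Set.mem_univ,
          iff_true, not_le]
        obtain ⟨n, hn⟩ := exists_nat_gt (-(u z))
        exact ⟨n, by linarith⟩
      rw [huniv] at hn0
      simp [measure_univ] at hn0
    refine ⟨-(n : ℝ), fun t ht => ?_⟩
    by_contra hlt; push_neg at hlt
    have hsub : {z | u z ≤ t} ⊆ {z | u z ≤ -(n : ℝ)} := fun z hz => le_trans hz hlt.le
    have h2 := measure_mono_null hsub hn
    rw [ht] at h2
    norm_num at h2
  set c := sInf E with hc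
  have hup : ∀ t : ℝ, c < t → ρ {z | u z ≤ t} = 1 := by
    intro t ht
    obtain ⟨s, hsE, hst⟩ := exists_lt_of_csInf_lt hne ht
    refine le_antisymm prob_le_one ?_
    calc (1 : ENNReal) = ρ {z | u z ≤ s} := hsE.symm
      _ ≤ ρ {z | u z ≤ t} := measure_mono fun z hz => le_trans hz hst.le
  have hdown : ∀ t : ℝ, t < c → ρ {z | u z ≤ t} = 0 := by
    intro t ht
    refine (hm t).resolve_right fun h1 => ?_
    exact absurd (csInf_le hbdd h1) (not_le.mpr ht)
  have hlow : ρ {z | u z < c} = 0 := by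
    have hsub : {z | u z < c} ⊆ ⋃ n : ℕ, {z | u z ≤ c - 1 / (n + 1)} := by
      intro z hz
      obtain ⟨n, hn⟩ := exists_nat_one_div_lt (show (0 : ℝ) < c - u z by
        simp only [Set.mem_setOf_eq] at hz; linarith)
      simp only [Set.mem_iUnion, Set.mem_setOf_eq]
      exact ⟨n, by linarith⟩
    refine measure_mono_null hsub (measure_iUnion_null fun n => hdown _ ?_)
    have : (0 : ℝ) < 1 / ((n : ℝ) + 1) := by positivity
    linarith
  have hhi : ρ {z | c < u z} = 0 := by
    have hsub : {z | c < u z} ⊆ ⋃ n : ℕ, {z | u z ≤ c + 1 / (n + 1)}ᶜ := by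
      intro z hz
      obtain ⟨n, hn⟩ := exists_nat_one_div_lt (show (0 : ℝ) < u z - c by
        simp only [Set.mem_setOf_eq] at hz; linarith)
      simp only [Set.mem_iUnion, Set.mem_compl_iff, Set.mem_setOf_eq, not_le]
      exact ⟨n, by linarith⟩
    refine measure_mono_null hsub (measure_iUnion_null fun n => ?_)
    refine (prob_compl_eq_zero_iff (hSmeas _)).mpr (hup _ ?_)
    have : (0 : ℝ) < 1 / ((n : ℝ) + 1) := by positivity
    linarith
  refine ⟨c, ?_⟩
  rw [Filter.eventuallyEq_iff_exists_mem]
  refine ⟨{z | u z = c}, ?_, fun z hz => hz⟩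
  rw [mem_ae_iff]
  refine measure_mono_null (fun z hz => ?_) (measure_union_null hlow hhi)
  exact lt_or_gt_of_ne hz

private lemma lintegral_nnnorm_sq_lt_top_of_memℒp {α : Type*} [MeasurableSpace α]
    {ρ : Measure α} {f : α → ℂ} (hf : MemLp f 2 ρ) :
    ∫⁻ a, (‖f a‖₊ : ENNReal) ^ (2 : ℕ) ∂ρ < ⊤ := by
  have h := hf.2
  rw [eLpNorm_eq_lintegral_rpow_enorm_toReal two_ne_zero ENNReal.ofNat_ne_top] at h
  have h2 : ((2 : ENNReal)).toReal = (2 : ℝ) := by simp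
  rw [h2] at h
  have h3 : ∫⁻ a, (‖f a‖₊ : ENNReal) ^ (2 : ℝ) ∂ρ < ⊤ :=
    (ENNReal.rpow_lt_top_iff_of_pos (by norm_num : (0:ℝ) < 1/2)).mp h
  have h4 : ∀ a, (‖f a‖₊ : ENNReal) ^ (2 : ℝ) = (‖f a‖₊ : ENNReal) ^ (2 : ℕ) := by
    intro a
    rw [← ENNReal.rpow_natCast]
    norm_num
  simpa [h4] using h3

private lemma sq_lintegral_le_lintegral_sq {α : Type*} [MeasurableSpace α] {ρ : Measure α}
    [IsProbabilityMeasure ρ] {w : α → ENNReal} (hw : AEMeasurable w ρ) :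
    (∫⁻ a, w a ∂ρ) ^ (2 : ℕ) ≤ ∫⁻ a, (w a) ^ (2 : ℕ) ∂ρ := by
  have hpq : Real.HolderConjugate 2 2 := Real.HolderConjugate.two_two
  have h := ENNReal.lintegral_mul_le_Lp_mul_Lq ρ hpq hw
    (aemeasurable_const (b := (1 : ENNReal)))
  simp only [Pi.mul_apply, mul_one, ENNReal.one_rpow, lintegral_const, measure_univ,
    one_mul] at h
  -- h : ∫⁻ w ≤ (∫⁻ w ^ (2:ℝ)) ^ (1/2) * 1 ^ (1/2)
  have h' : ∫⁻ a, w a ∂ρ ≤ (∫⁻ a, w a ^ (2 : ℝ) ∂ρ) ^ ((1:ℝ)/2) := by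
    simpa using h
  have h2 : (∫⁻ a, w a ∂ρ) ^ (2 : ℝ) ≤ ((∫⁻ a, w a ^ (2 : ℝ) ∂ρ) ^ ((1:ℝ)/2)) ^ (2 : ℝ) :=
    ENNReal.rpow_le_rpow h' (by norm_num)
  have h4 : ((∫⁻ a, w a ^ (2 : ℝ) ∂ρ) ^ ((1:ℝ)/2)) ^ (2 : ℝ) = ∫⁻ a, w a ^ (2 : ℝ) ∂ρ := by
    rw [← ENNReal.rpow_mul]; norm_num
  rw [h4] at h2
  have h5 : (∫⁻ a, w a ∂ρ) ^ (2 : ℝ) = (∫⁻ a, w a ∂ρ) ^ (2 : ℕ) := by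
    rw [← ENNReal.rpow_natCast]; norm_num
  have h6 : ∫⁻ a, w a ^ (2 : ℝ) ∂ρ = ∫⁻ a, w a ^ (2 : ℕ) ∂ρ :=
    lintegral_congr fun a => by rw [← ENNReal.rpow_natCast]; norm_num
  rw [h5, h6] at h2
  exact h2

/-- **Weakly mixing actions absorb invariants of product actions.**
If a countable group `G` acts weakly mixingly and measure-preservingly on `(X,μ)`, then for
any measure-preserving `G`-action on `(Y,ν)`, every diagonally invariant `F ∈ L²(X × Y)`
depends only on the second variable, via an invariant `h ∈ L²(Y,ν)`. -/
theorem weakly_mixing_product_invariant_functions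
    {G : Type} [Group G] [Countable G]
    {X Y : Type} [MeasurableSpace X] [MeasurableSpace Y]
    (μ : Measure X) [IsProbabilityMeasure μ] (ν : Measure Y) [IsProbabilityMeasure ν]
    (aX : G → X → X) (aY : G → Y → Y)
    (hXmeas : ∀ g, Measurable (aX g)) (hXmp : ∀ g, MeasurePreserving (aX g) μ μ)
    (hXone : ∀ x, aX 1 x = x) (hXmul : ∀ g h x, aX (g * h) x = aX g (aX h x))
    (hYmeas : ∀ g, Measurable (aY g)) (hYmp : ∀ g, MeasurePreserving (aY g) ν ν)
    (hYone : ∀ y, aY 1 y = y) (hYmul : ∀ g h y, aY (g * h) y = aY g (aY h y))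
    (hwmix : ∀ S : Set (X × X), MeasurableSet S →
      (∀ g : G, (μ.prod μ) (symmDiff S ((fun p => (aX g p.1, aX g p.2)) ⁻¹' S)) = 0) →
      (μ.prod μ) S = 0 ∨ (μ.prod μ) Sᶜ = 0)
    (F : Lp ℂ 2 (μ.prod ν))
    (hinv : ∀ g : G, ∀ᵐ p ∂(μ.prod ν), F (aX g p.1, aY g p.2) = F p) :
    ∃ h : Y → ℂ, Measurable h ∧ MemLp h 2 ν ∧
      (∀ g : G, ∀ᵐ y ∂ν, h (aY g y) = h y) ∧
      (∀ᵐ p ∂(μ.prod ν), F p = h p.2) := by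
  classical
  -- measurable representative of F
  obtain ⟨f, hfm, hff⟩ : ∃ f : X × Y → ℂ, StronglyMeasurable f ∧ (⇑F) =ᵐ[μ.prod ν] f :=
    ⟨(Lp.aestronglyMeasurable F).mk F, (Lp.aestronglyMeasurable F).stronglyMeasurable_mk,
      (Lp.aestronglyMeasurable F).ae_eq_mk⟩
  have hfmeas : Measurable f := hfm.measurable
  have hf2 : MemLp f 2 (μ.prod ν) := (Lp.memLp F).ae_eq hff
  have hfint : Integrable f (μ.prod ν) := hf2.integrable one_le_two
  -- measure preserving diagonal maps
  have hTmp : ∀ γ : G, MeasurePreserving (Prod.map (aX γ) (aY γ)) (μ.prod ν) (μ.prod ν) :=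
    fun γ => (hXmp γ).prod (hYmp γ)
  have mpsnd : MeasurePreserving (Prod.snd : X × Y → Y) (μ.prod ν) ν :=
    ⟨measurable_snd, by rw [Measure.map_snd_prod]; simp⟩
  have mpfstXX : MeasurePreserving (Prod.fst : X × X → X) (μ.prod μ) μ :=
    ⟨measurable_fst, by rw [Measure.map_fst_prod]; simp⟩
  have mpsndXX : MeasurePreserving (Prod.snd : X × X → X) (μ.prod μ) μ :=
    ⟨measurable_snd, by rw [Measure.map_snd_prod]; simp⟩
  -- invariance of f
  have hfinv : ∀ γ : G, ∀ᵐ p ∂(μ.prod ν), f (aX γ p.1, aY γ p.2) = f p := by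
    intro γ
    have h2 : (fun p : X × Y => (F : X × Y → ℂ) ((aX γ p.1, aY γ p.2)))
        =ᵐ[μ.prod ν] (fun p => f ((aX γ p.1, aY γ p.2))) :=
      (hTmp γ).quasiMeasurePreserving.ae_eq_comp hff
    filter_upwards [hinv γ, h2, hff] with p e1 e2 e3
    rw [← e2, e1, e3]
  -- slice integrability
  have hslice : ∀ᵐ y ∂ν, Integrable (fun x => f (x, y)) μ := hfint.prod_left_ae
  -- the candidate function h
  set h : Y → ℂ := fun y => ∫ x, f (x, y) ∂μ with hhdef
  have hhsm : StronglyMeasurable h :=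
    StronglyMeasurable.integral_prod_left (f := fun x y => f (x, y)) hfm
  have hhm : Measurable h := hhsm.measurable
  -- swap of a.e. invariance
  have hswap : ∀ γ : G, ∀ᵐ y ∂ν, ∀ᵐ x ∂μ, f (aX γ x, aY γ y) = f (x, y) := by
    intro γ
    have hmeasset : MeasurableSet {q : Y × X | f (aX γ q.2, aY γ q.1) = f (q.2, q.1)} := by
      refine measurableSet_eq_fun ?_ ?_
      · exact hfmeas.comp (((hXmeas γ).comp measurable_snd).prodMk
          ((hYmeas γ).comp measurable_fst))
      · exact hfmeas.comp (measurable_snd.prodMk measurable_fst)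
    have h1 : ∀ᵐ q ∂(ν.prod μ), f (aX γ q.2, aY γ q.1) = f (q.2, q.1) := by
      rw [← Measure.prod_swap, ae_map_iff measurable_swap.aemeasurable hmeasset]
      exact hfinv γ
    exact Measure.ae_ae_of_ae_prod h1
  -- invariance of h
  have hinvh : ∀ γ : G, ∀ᵐ y ∂ν, h (aY γ y) = h y := by
    intro γ
    filter_upwards [hswap γ] with y hy
    have e2 : ∫ x, f (x, aY γ y) ∂μ = ∫ x, f (aX γ x, aY γ y) ∂μ := by
      conv_lhs => rw [← (hXmp γ).map_eq]
      rw [integral_map (hXmeas γ).aemeasurable]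
      exact (hfm.comp_measurable (measurable_id.prodMk measurable_const)).aestronglyMeasurable
    have e3 : ∫ x, f (aX γ x, aY γ y) ∂μ = ∫ x, f (x, y) ∂μ := integral_congr_ae hy
    rw [hhdef]
    simp only []
    rw [e2, e3]
  -- square integrability of f as a lintegral
  have hf2lint : ∫⁻ p, (‖f p‖₊ : ENNReal) ^ (2:ℕ) ∂(μ.prod ν) < ⊤ :=
    lintegral_nnnorm_sq_lt_top_of_memℒp hf2
  -- MemLp of h
  have hh2 : MemLp h 2 ν := by
    refine ⟨hhsm.aestronglyMeasurable, ?_⟩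
    rw [eLpNorm_eq_lintegral_rpow_enorm_toReal two_ne_zero ENNReal.ofNat_ne_top]
    refine ENNReal.rpow_lt_top_of_nonneg (by norm_num) (ne_of_lt ?_)
    have hconv : ∀ y : Y, (‖h y‖₊ : ENNReal) ^ ((2:ENNReal)).toReal
        = (‖h y‖₊ : ENNReal) ^ (2:ℕ) := by
      intro y
      rw [← ENNReal.rpow_natCast]
      norm_num
    calc ∫⁻ y, (‖h y‖₊ : ENNReal) ^ ((2:ENNReal)).toReal ∂ν
        = ∫⁻ y, (‖h y‖₊ : ENNReal) ^ (2:ℕ) ∂ν := lintegral_congr hconv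
      _ ≤ ∫⁻ y, ∫⁻ x, (‖f (x, y)‖₊ : ENNReal) ^ (2:ℕ) ∂μ ∂ν := by
          refine lintegral_mono fun y => ?_
          calc (‖h y‖₊ : ENNReal) ^ (2:ℕ)
              ≤ (∫⁻ x, (‖f (x, y)‖₊ : ENNReal) ∂μ) ^ (2:ℕ) := by
                gcongr
                exact enorm_integral_le_lintegral_enorm _
            _ ≤ ∫⁻ x, (‖f (x, y)‖₊ : ENNReal) ^ (2:ℕ) ∂μ := by
                refine sq_lintegral_le_lintegral_sq (Measurable.aemeasurable ?_)
                exact (hfmeas.comp measurable_prodMk_right).enorm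
      _ = ∫⁻ p, (‖f p‖₊ : ENNReal) ^ (2:ℕ) ∂(μ.prod ν) :=
          (lintegral_prod_symm _ ((hfmeas.enorm.pow_const _).aemeasurable)).symm
      _ < ⊤ := hf2lint
  -- the function g
  set g : X × Y → ℂ := fun p => f p - h p.2 with hgdef
  have hgmeas : Measurable g := hfmeas.sub (hhm.comp measurable_snd)
  have hgsm : StronglyMeasurable g := hgmeas.stronglyMeasurable
  have hg2 : MemLp g 2 (μ.prod ν) := hf2.sub (hh2.comp_measurePreserving mpsnd)
  have hgint : Integrable g (μ.prod ν) := hg2.integrable one_le_two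
  have hg2lint : ∫⁻ p, (‖g p‖₊ : ENNReal) ^ (2:ℕ) ∂(μ.prod ν) < ⊤ :=
    lintegral_nnnorm_sq_lt_top_of_memℒp hg2
  have hgzero : ∀ᵐ y ∂ν, ∫ x, g (x, y) ∂μ = 0 := by
    filter_upwards [hslice] with y hy
    have e0 : ∫ x, g (x, y) ∂μ = ∫ x, (f (x, y) - h y) ∂μ := rfl
    have e1 := integral_sub hy (integrable_const (h y) (μ := μ))
    rw [e0, e1, integral_const]
    simp [hhdef, measure_univ]
  -- invariance of g
  have hginv : ∀ γ : G, ∀ᵐ p ∂(μ.prod ν), g (aX γ p.1, aY γ p.2) = g p := by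
    intro γ
    have hy : (fun p : X × Y => h (aY γ p.2)) =ᵐ[μ.prod ν] (fun p => h p.2) :=
      mpsnd.quasiMeasurePreserving.ae_eq_comp (hinvh γ)
    filter_upwards [hfinv γ, hy] with p e1 e2
    simp only [hgdef]
    rw [e1]
    rw [show h ((aX γ p.1, aY γ p.2) : X × Y).2 = h (aY γ p.2) from rfl, e2]
  -- the kernel K and the triple function Φ
  set Φ : (X × X) × Y → ℂ :=
    fun r => g (r.1.1, r.2) * (starRingEnd ℂ) (g (r.1.2, r.2)) with hΦdef
  have hΦmeas : Measurable Φ := by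
    have hm1 : Measurable fun r : (X × X) × Y => g (r.1.1, r.2) :=
      hgmeas.comp ((measurable_fst.fst).prodMk measurable_snd)
    have hm2 : Measurable fun r : (X × X) × Y => g (r.1.2, r.2) :=
      hgmeas.comp ((measurable_fst.snd).prodMk measurable_snd)
    exact hm1.mul (continuous_star.measurable.comp hm2)
  set K : X × X → ℂ := fun q => ∫ y, Φ (q, y) ∂ν with hKdef
  have hKsm : StronglyMeasurable K :=
    StronglyMeasurable.integral_prod_right' (hΦmeas.stronglyMeasurable)
  -- integrability of Φ
  have hΦint : Integrable Φ ((μ.prod μ).prod ν) := by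
    refine ⟨hΦmeas.aestronglyMeasurable, ?_⟩
    have hb : ∀ r : (X × X) × Y, (‖Φ r‖₊ : ENNReal)
        ≤ (‖g (r.1.1, r.2)‖₊ : ENNReal) ^ (2:ℕ) + (‖g (r.1.2, r.2)‖₊ : ENNReal) ^ (2:ℕ) := by
      intro r
      have : (‖Φ r‖₊ : ENNReal)
          = (‖g (r.1.1, r.2)‖₊ : ENNReal) * (‖g (r.1.2, r.2)‖₊ : ENNReal) := by
        simp [hΦdef, nnnorm_mul]
      rw [this]
      rcases le_total ((‖g (r.1.1, r.2)‖₊ : ENNReal)) ((‖g (r.1.2, r.2)‖₊ : ENNReal)) with hle | hle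
      · calc (‖g (r.1.1, r.2)‖₊ : ENNReal) * ‖g (r.1.2, r.2)‖₊
            ≤ (‖g (r.1.2, r.2)‖₊ : ENNReal) * ‖g (r.1.2, r.2)‖₊ := by gcongr
          _ = (‖g (r.1.2, r.2)‖₊ : ENNReal) ^ (2:ℕ) := by ring
          _ ≤ _ := le_add_self
      · calc (‖g (r.1.1, r.2)‖₊ : ENNReal) * ‖g (r.1.2, r.2)‖₊
            ≤ (‖g (r.1.1, r.2)‖₊ : ENNReal) * ‖g (r.1.1, r.2)‖₊ := by gcongr
          _ = (‖g (r.1.1, r.2)‖₊ : ENNReal) ^ (2:ℕ) := by ring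
          _ ≤ _ := self_le_add_right _ _
    have m1 : MeasurePreserving (Prod.map (Prod.fst : X × X → X) (id : Y → Y))
        ((μ.prod μ).prod ν) (μ.prod ν) := mpfstXX.prod (MeasurePreserving.id ν)
    have m2 : MeasurePreserving (Prod.map (Prod.snd : X × X → X) (id : Y → Y))
        ((μ.prod μ).prod ν) (μ.prod ν) := mpsndXX.prod (MeasurePreserving.id ν)
    have hw : Measurable fun p : X × Y => (‖g p‖₊ : ENNReal) ^ (2:ℕ) :=
      hgmeas.enorm.pow_const _
    show ∫⁻ r, (‖Φ r‖₊ : ENNReal) ∂((μ.prod μ).prod ν) < ⊤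
    calc ∫⁻ r, (‖Φ r‖₊ : ENNReal) ∂((μ.prod μ).prod ν)
        ≤ ∫⁻ r, ((‖g (r.1.1, r.2)‖₊ : ENNReal) ^ (2:ℕ)
            + (‖g (r.1.2, r.2)‖₊ : ENNReal) ^ (2:ℕ)) ∂((μ.prod μ).prod ν) :=
          lintegral_mono hb
      _ = (∫⁻ r, (‖g (r.1.1, r.2)‖₊ : ENNReal) ^ (2:ℕ) ∂((μ.prod μ).prod ν))
          + ∫⁻ r, (‖g (r.1.2, r.2)‖₊ : ENNReal) ^ (2:ℕ) ∂((μ.prod μ).prod ν) := by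
          refine lintegral_add_left ?_ _
          exact (hgmeas.comp ((measurable_fst.fst).prodMk measurable_snd)).enorm.pow_const _
      _ = (∫⁻ p, (‖g p‖₊ : ENNReal) ^ (2:ℕ) ∂(μ.prod ν))
          + ∫⁻ p, (‖g p‖₊ : ENNReal) ^ (2:ℕ) ∂(μ.prod ν) := by
          have f1 : ∫⁻ r, (‖g (r.1.1, r.2)‖₊ : ENNReal) ^ (2:ℕ) ∂((μ.prod μ).prod ν)
              = ∫⁻ p, (‖g p‖₊ : ENNReal) ^ (2:ℕ) ∂(μ.prod ν) := m1.lintegral_comp hw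
          have f2 : ∫⁻ r, (‖g (r.1.2, r.2)‖₊ : ENNReal) ^ (2:ℕ) ∂((μ.prod μ).prod ν)
              = ∫⁻ p, (‖g p‖₊ : ENNReal) ^ (2:ℕ) ∂(μ.prod ν) := m2.lintegral_comp hw
          rw [f1, f2]
      _ < ⊤ := by
          exact ENNReal.add_lt_top.mpr ⟨hg2lint, hg2lint⟩
  have hKint : Integrable K (μ.prod μ) := hΦint.integral_prod_left
  -- a.e. invariance of K under the diagonal action
  have haeLift : ∀ {P : X → Prop}, (∀ᵐ x ∂μ, P x) →
      (∀ᵐ q ∂(μ.prod μ), P q.1) ∧ (∀ᵐ q ∂(μ.prod μ), P q.2) := by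
    intro P hP
    constructor
    · exact ae_of_ae_map measurable_fst.aemeasurable
        (mpfstXX.quasiMeasurePreserving.absolutelyContinuous.ae_le hP)
    · exact ae_of_ae_map measurable_snd.aemeasurable
        (mpsndXX.quasiMeasurePreserving.absolutelyContinuous.ae_le hP)
  have hKinv : ∀ γ : G, ∀ᵐ q ∂(μ.prod μ), K (aX γ q.1, aX γ q.2) = K q := by
    intro γ
    have hstep1 : ∀ q : X × X, K (aX γ q.1, aX γ q.2)
        = ∫ y, g (aX γ q.1, aY γ y) * (starRingEnd ℂ) (g (aX γ q.2, aY γ y)) ∂ν := by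
      intro q
      have hmi : AEStronglyMeasurable
          (fun y => g (aX γ q.1, y) * (starRingEnd ℂ) (g (aX γ q.2, y)))
          (Measure.map (aY γ) ν) := by
        rw [(hYmp γ).map_eq]
        have hm1 : Measurable fun y : Y => g (aX γ q.1, y) :=
          hgmeas.comp (measurable_const.prodMk measurable_id)
        have hm2 : Measurable fun y : Y => g (aX γ q.2, y) :=
          hgmeas.comp (measurable_const.prodMk measurable_id)
        exact (hm1.mul (continuous_star.measurable.comp hm2)).aestronglyMeasurable
      calc K (aX γ q.1, aX γ q.2)
          = ∫ y, g (aX γ q.1, y) * (starRingEnd ℂ) (g (aX γ q.2, y)) ∂ν := rfl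
        _ = ∫ y, g (aX γ q.1, y) * (starRingEnd ℂ) (g (aX γ q.2, y))
            ∂(Measure.map (aY γ) ν) := by rw [(hYmp γ).map_eq]
        _ = ∫ y, g (aX γ q.1, aY γ y) * (starRingEnd ℂ) (g (aX γ q.2, aY γ y)) ∂ν :=
            integral_map (hYmeas γ).aemeasurable hmi
    have hgswap : ∀ᵐ x ∂μ, ∀ᵐ y ∂ν, g (aX γ x, aY γ y) = g (x, y) :=
      Measure.ae_ae_of_ae_prod (hginv γ)
    obtain ⟨h1, _⟩ := haeLift hgswap
    obtain ⟨_, h2⟩ := haeLift hgswap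
    filter_upwards [h1, h2] with q e1 e2
    rw [hstep1 q]
    refine integral_congr_ae ?_
    filter_upwards [e1, e2] with y d1 d2
    rw [d1, d2]
  -- ergodicity: K is a.e. constant
  obtain ⟨c1, hc1⟩ := ae_const_of_forall_invariant'
    (fun (γ : G) (q : X × X) => (aX γ q.1, aX γ q.2)) hwmix
    (fun q => (K q).re) (Complex.measurable_re.comp hKsm.measurable)
    (fun γ => (hKinv γ).mono fun q e => congrArg Complex.re e)
  obtain ⟨c2, hc2⟩ := ae_const_of_forall_invariant'
    (fun (γ : G) (q : X × X) => (aX γ q.1, aX γ q.2)) hwmix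
    (fun q => (K q).im) (Complex.measurable_im.comp hKsm.measurable)
    (fun γ => (hKinv γ).mono fun q e => congrArg Complex.im e)
  have hKc : K =ᵐ[μ.prod μ] fun _ => (⟨c1, c2⟩ : ℂ) := by
    filter_upwards [hc1, hc2] with q e1 e2
    exact Complex.ext e1 e2
  -- restricted integrability of Φ
  have hΦA : ∀ A : Set X, MeasurableSet A →
      Integrable Φ (((μ.restrict A).prod (μ.restrict A)).prod ν) := by
    intro A hA
    rw [Measure.prod_restrict]
    have hre : ((μ.prod μ).restrict (A ×ˢ A)).prod ν
        = (((μ.prod μ).prod ν)).restrict ((A ×ˢ A) ×ˢ Set.univ) := by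
      rw [← Measure.prod_restrict (A ×ˢ A) Set.univ, Measure.restrict_univ]
    rw [hre]
    exact hΦint.restrict
  -- Fubini identity for rectangles A × A
  have key : ∀ A : Set X, MeasurableSet A →
      ∫ q in A ×ˢ A, K q ∂(μ.prod μ)
        = ∫ y, (∫ x in A, g (x, y) ∂μ) * (starRingEnd ℂ) (∫ x in A, g (x, y) ∂μ) ∂ν := by
    intro A hA
    have hres : (μ.restrict A).prod (μ.restrict A) = (μ.prod μ).restrict (A ×ˢ A) :=
      Measure.prod_restrict A A
    calc ∫ q in A ×ˢ A, K q ∂(μ.prod μ)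
        = ∫ q, K q ∂((μ.restrict A).prod (μ.restrict A)) := by rw [hres]
      _ = ∫ q, ∫ y, Φ (q, y) ∂ν ∂((μ.restrict A).prod (μ.restrict A)) := rfl
      _ = ∫ r, Φ (r.1, r.2) ∂(((μ.restrict A).prod (μ.restrict A)).prod ν) :=
          integral_integral (by exact hΦA A hA)
      _ = ∫ r, Φ r ∂(((μ.restrict A).prod (μ.restrict A)).prod ν) := by
          refine integral_congr_ae (Filter.Eventually.of_forall fun r => rfl)
      _ = ∫ y, ∫ q, Φ (q, y) ∂((μ.restrict A).prod (μ.restrict A)) ∂ν :=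
          integral_prod_symm _ (hΦA A hA)
      _ = ∫ y, (∫ x in A, g (x, y) ∂μ) * (starRingEnd ℂ) (∫ x in A, g (x, y) ∂μ) ∂ν := by
          refine integral_congr_ae (Filter.Eventually.of_forall fun y => ?_)
          calc ∫ q, Φ (q, y) ∂((μ.restrict A).prod (μ.restrict A))
              = (∫ x, g (x, y) ∂(μ.restrict A))
                * ∫ x, (starRingEnd ℂ) (g (x, y)) ∂(μ.restrict A) :=
                integral_prod_mul (fun x => g (x, y)) (fun x => (starRingEnd ℂ) (g (x, y)))
            _ = (∫ x in A, g (x, y) ∂μ) * (starRingEnd ℂ) (∫ x in A, g (x, y) ∂μ) := by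
                rw [integral_conj]
  -- the constant is zero
  have hc0 : (⟨c1, c2⟩ : ℂ) = 0 := by
    have h1 : ∫ q, K q ∂(μ.prod μ) = (⟨c1, c2⟩ : ℂ) := by
      rw [integral_congr_ae hKc, integral_const]
      simp [measure_univ]
    have h2 : ∫ q, K q ∂(μ.prod μ) = 0 := by
      have hk := key Set.univ MeasurableSet.univ
      rw [Set.univ_prod_univ, setIntegral_univ] at hk
      rw [hk]
      refine integral_eq_zero_of_ae ?_
      filter_upwards [hgzero] with y hy
      rw [setIntegral_univ, hy]
      simp
    rw [h1] at h2
    exact h2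
  have hK0 : K =ᵐ[μ.prod μ] fun _ => (0 : ℂ) := by
    rw [← hc0]
    exact hKc
  -- all partial integrals over measurable A vanish a.e.
  have hGA : ∀ A : Set X, MeasurableSet A → ∀ᵐ y ∂ν, ∫ x in A, g (x, y) ∂μ = 0 := by
    intro A hA
    have h1 : ∫ q in A ×ˢ A, K q ∂(μ.prod μ) = 0 :=
      integral_eq_zero_of_ae (ae_restrict_of_ae hK0)
    rw [key A hA] at h1
    have heq : (fun y => (∫ x in A, g (x, y) ∂μ)
          * (starRingEnd ℂ) (∫ x in A, g (x, y) ∂μ))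
        = fun y => (Complex.normSq (∫ x in A, g (x, y) ∂μ) : ℂ) := by
      funext y
      exact Complex.mul_conj _
    rw [heq] at h1
    have h3 : ((∫ y, Complex.normSq (∫ x in A, g (x, y) ∂μ) ∂ν : ℝ) : ℂ)
        = ∫ y, ((Complex.normSq (∫ x in A, g (x, y) ∂μ) : ℝ) : ℂ) ∂ν := integral_ofReal.symm
    have hreal : ∫ y, Complex.normSq (∫ x in A, g (x, y) ∂μ) ∂ν = 0 := by
      have h4 := h3.trans h1
      exact_mod_cast h4
    -- integrability of the normSq integrand
    have hintc : Integrable (fun y => ∫ q, Φ (q, y)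
        ∂((μ.restrict A).prod (μ.restrict A))) ν := (hΦA A hA).integral_prod_right
    have heq2 : (fun y => ∫ q, Φ (q, y) ∂((μ.restrict A).prod (μ.restrict A)))
        = fun y => (Complex.normSq (∫ x in A, g (x, y) ∂μ) : ℂ) := by
      funext y
      calc ∫ q, Φ (q, y) ∂((μ.restrict A).prod (μ.restrict A))
          = (∫ x, g (x, y) ∂(μ.restrict A))
            * ∫ x, (starRingEnd ℂ) (g (x, y)) ∂(μ.restrict A) :=
            integral_prod_mul (fun x => g (x, y)) (fun x => (starRingEnd ℂ) (g (x, y)))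
        _ = (∫ x in A, g (x, y) ∂μ) * (starRingEnd ℂ) (∫ x in A, g (x, y) ∂μ) := by
            rw [integral_conj]
        _ = (Complex.normSq (∫ x in A, g (x, y) ∂μ) : ℂ) := Complex.mul_conj _
    rw [heq2] at hintc
    have hint_r : Integrable (fun y => Complex.normSq (∫ x in A, g (x, y) ∂μ)) ν := by
      have := hintc.re
      simpa using this
    have hz := (integral_eq_zero_iff_of_nonneg
      (fun y => Complex.normSq_nonneg _) hint_r).mp hreal
    filter_upwards [hz] with y hy
    have : Complex.normSq (∫ x in A, g (x, y) ∂μ) = 0 := hy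
    exact Complex.normSq_eq_zero.mp this
  -- integrals over all rectangles vanish
  have hrect : ∀ A : Set X, MeasurableSet A → ∀ B : Set Y, MeasurableSet B →
      ∫ p in A ×ˢ B, g p ∂(μ.prod ν) = 0 := by
    intro A hA B hB
    rw [← Measure.prod_restrict]
    rw [integral_prod_symm _ (by rw [Measure.prod_restrict]; exact hgint.restrict)]
    refine integral_eq_zero_of_ae ?_
    exact ae_restrict_of_ae (hGA A hA)
  have htot : ∫ p, g p ∂(μ.prod ν) = 0 := by
    have := hrect Set.univ MeasurableSet.univ Set.univ MeasurableSet.univ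
    rwa [Set.univ_prod_univ, setIntegral_univ] at this
  -- all set integrals vanish
  have hall : ∀ S : Set (X × Y), MeasurableSet S → ∫ p in S, g p ∂(μ.prod ν) = 0 := by
    intro S hS
    refine MeasurableSpace.induction_on_inter (C := fun S _ => ∫ p in S, g p ∂(μ.prod ν) = 0)
      generateFrom_prod.symm isPiSystem_prod ?_ ?_ ?_ ?_ S hS
    · simp
    · rintro t ⟨A, hA, B, hB, rfl⟩
      exact hrect A hA B hB
    · intro t ht h0
      have hsum := integral_add_compl ht hgint
      rw [h0, zero_add] at hsum
      rw [hsum, htot]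
    · intro s hdisj hmeas h0
      rw [integral_iUnion hmeas hdisj hgint.integrableOn]
      simp [h0]
  have hg0 : g =ᵐ[μ.prod ν] 0 :=
    hgint.ae_eq_zero_of_forall_setIntegral_eq_zero (fun s hs _ => hall s hs)
  -- conclusion
  refine ⟨h, hhm, hh2, hinvh, ?_⟩
  filter_upwards [hff, hg0] with p e1 e2
  have e3 : f p - h p.2 = 0 := e2
  rw [e1]
  have := sub_eq_zero.mp e3
  exact this
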